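/- Let f : ℝ^n → ℝ be twice differentiable at x with ∇f(x) = 0, let δ > 0 and ε₂ > 0. Then φ_{f,2}^δ(x) ≤ ε₂·δ²/2 if and only if the Hessian ∇²f(x) satisfies ∇²f(x)[d,d] ≥ −ε₂‖d‖² for all d ∈ ℝ^n (equivalently, λ_min[∇²f(x)] ≥ −ε₂). -/

import Mathlib

set_option maxHeartbeats 1000000


/-- For `f : ℝⁿ → ℝ` twice differentiable at `x` with `∇f(x) = 0`, `δ > 0` and
`ε₂ > 0`: the second-order optimality measure
`φ_{f,2}^δ(x) = sup_{‖d‖ ≤ δ} (−⟪∇f(x), d⟫ − ½∇²f(x)[d,d])` satisfies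
`φ_{f,2}^δ(x) ≤ ε₂·δ²/2` iff `∇²f(x)[d,d] ≥ −ε₂‖d‖²` for all `d`. -/
theorem phi_two_le_iff_hessian_almost_psd
    (n : ℕ) (f : EuclideanSpace ℝ (Fin n) → ℝ) (x : EuclideanSpace ℝ (Fin n))
    (hf1 : DifferentiableAt ℝ f x) (hf2 : DifferentiableAt ℝ (fderiv ℝ f) x)
    (hgrad : gradient f x = 0) (δ : ℝ) (hδ : 0 < δ) (ε₂ : ℝ) (hε₂ : 0 < ε₂) :
    sSup {y : ℝ | ∃ d : EuclideanSpace ℝ (Fin n), ‖d‖ ≤ δ ∧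
        y = -(inner ℝ (gradient f x) d : ℝ) - (1 / 2) * fderiv ℝ (fderiv ℝ f) x d d}
      ≤ ε₂ * δ ^ 2 / 2 ↔
    ∀ d : EuclideanSpace ℝ (Fin n), fderiv ℝ (fderiv ℝ f) x d d ≥ -ε₂ * ‖d‖ ^ 2 := by
  set B := fderiv ℝ (fderiv ℝ f) x with hB
  have hzero : ∀ d : EuclideanSpace ℝ (Fin n), (inner ℝ (gradient f x) d : ℝ) = 0 := by
    intro d; rw [hgrad]; simp
  set S : Set ℝ := {y : ℝ | ∃ d : EuclideanSpace ℝ (Fin n), ‖d‖ ≤ δ ∧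
      y = -(inner ℝ (gradient f x) d : ℝ) - (1 / 2) * B d d} with hS
  have hbdd : BddAbove S := by
    refine ⟨(1 / 2) * ‖B‖ * δ ^ 2, ?_⟩
    rintro y ⟨d, hd, rfl⟩
    rw [hzero]
    have h1 : |B d d| ≤ ‖B‖ * δ ^ 2 := by
      calc |B d d| ≤ ‖B d‖ * ‖d‖ := (B d).le_opNorm d
        _ ≤ ‖B‖ * ‖d‖ * ‖d‖ := by
            exact mul_le_mul_of_nonneg_right (B.le_opNorm d) (norm_nonneg d)
        _ ≤ ‖B‖ * δ ^ 2 := by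
            have h2 : ‖d‖ * ‖d‖ ≤ δ * δ := mul_le_mul hd hd (norm_nonneg d) hδ.le
            nlinarith [B.opNorm_nonneg]
    have := abs_le.mp h1
    nlinarith
  constructor
  · intro h d
    rcases eq_or_ne d 0 with rfl | hd
    · simp
    · have hdpos : (0:ℝ) < ‖d‖ := norm_pos_iff.mpr hd
      set t : ℝ := δ / ‖d‖ with ht
      have htpos : 0 < t := div_pos hδ hdpos
      have htd : t * ‖d‖ = δ := div_mul_cancel₀ δ (ne_of_gt hdpos)
      have hmem : -(inner ℝ (gradient f x) (t • d) : ℝ) - (1 / 2) * B (t • d) (t • d) ∈ S := by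
        exact ⟨t • d, by rw [norm_smul, Real.norm_eq_abs, abs_of_pos htpos, htd], rfl⟩
      have hle := (le_csSup hbdd hmem).trans h
      rw [hzero] at hle
      have hsm : B (t • d) (t • d) = t ^ 2 * B d d := by
        simp only [map_smul, ContinuousLinearMap.smul_apply, smul_eq_mul]
        ring
      rw [hsm] at hle
      have ht2 : t ^ 2 * ‖d‖ ^ 2 = δ ^ 2 := by nlinarith
      nlinarith [mul_pos htpos htpos, sq_nonneg t]
  · intro h
    refine Real.sSup_le ?_ (by positivity)
    rintro y ⟨d, hd, rfl⟩
    rw [hzero]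
    have := h d
    have h2 : ‖d‖ * ‖d‖ ≤ δ * δ := mul_le_mul hd hd (norm_nonneg d) hδ.le
    nlinarith
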